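/- Let G be a group with elements R_{iB}, R_{iC}, R_{iBC} for index data as below, satisfying the factorization R_{iBC} = R_{iB}·R_{iC} whenever ({i}, B, C) is admissible, and with R_{ij} denoting the two-element rotations. Then every R_{iBC} with |B|,|C| ≥ 1 lies in the subgroup generated by the elements R_{ij}: i.e., in the rotation presentation, the generators R_{ij} suffice to generate the group. -/

import Mathlib

/-- The position of `x` in the cyclic reading order of `Fin n` starting at `s`. -/
def cyclicPos {n : ℕ} (s x : Fin n) : ℕ := ((x - s : Fin n) : ℕ)

/-- A triple of pairwise disjoint subsets of the cyclically ordered set Fin n is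
admissible if, reading clockwise from some starting point, all elements of the
first set come before all elements of the second, which come before all elements
of the third. -/
def AdmissibleTriple {n : ℕ} (B₁ B₂ B₃ : Finset (Fin n)) : Prop :=
  Disjoint B₁ B₂ ∧ Disjoint B₁ B₃ ∧ Disjoint B₂ B₃ ∧
  ∃ s : Fin n,
    (∀ x ∈ B₁, ∀ y ∈ B₂, cyclicPos s x < cyclicPos s y) ∧
    (∀ y ∈ B₂, ∀ z ∈ B₃, cyclicPos s y < cyclicPos s z) ∧
    (∀ x ∈ B₁, ∀ z ∈ B₃, cyclicPos s x < cyclicPos s z)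

lemma cyclicPos_inj {n : ℕ} [NeZero n] (s : Fin n) {x y : Fin n} (h : cyclicPos s x = cyclicPos s y) :
    x = y := by
  have : (x - s : Fin n) = (y - s : Fin n) := Fin.val_injective h
  exact sub_left_injective this

lemma cyclicPos_self {n : ℕ} [NeZero n] (s : Fin n) : cyclicPos s s = 0 := by
  simp [cyclicPos, sub_self]


/-- in the rotation presentation, the factorization relations
R_{iBC} = R_{iB}·R_{iC} for admissible ({i}, B, C) imply that every rotation R_B
with |B| ≥ 2 lies in the subgroup generated by the two-element rotations R_{ij}. -/
theorem stmt_13 {n : ℕ} {G : Type*} [Group G] (R : Finset (Fin n) → G)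
    (hfact : ∀ (i : Fin n) (B C : Finset (Fin n)), B.Nonempty → C.Nonempty →
      AdmissibleTriple {i} B C →
      R ({i} ∪ B ∪ C) = R ({i} ∪ B) * R ({i} ∪ C)) :
    ∀ B : Finset (Fin n), 2 ≤ B.card →
      R B ∈ Subgroup.closure {g : G | ∃ i j : Fin n, i ≠ j ∧ g = R {i, j}} := by
  suffices h : ∀ m : ℕ, ∀ B : Finset (Fin n), B.card = m → 2 ≤ B.card →
      R B ∈ Subgroup.closure {g : G | ∃ i j : Fin n, i ≠ j ∧ g = R {i, j}} by
    intro B hB; exact h B.card B rfl hB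
  intro m
  induction m using Nat.strong_induction_on with
  | _ m ih =>
  intro B hm hB
  rcases eq_or_lt_of_le hB with h2 | h3
  · -- card B = 2
    obtain ⟨i, j, hij, rfl⟩ := Finset.card_eq_two.mp h2.symm
    exact Subgroup.subset_closure ⟨i, j, hij, rfl⟩
  · -- card B ≥ 3
    have h3 : 3 ≤ B.card := h3
    obtain ⟨i, hi⟩ := Finset.card_pos.mp (show 0 < B.card by omega)
    haveI : NeZero n := ⟨(Fin.pos i).ne'⟩
    set S := B \ {i} with hS
    have hScard : S.card = B.card - 1 := by
      rw [hS, Finset.card_sdiff_of_subset (Finset.singleton_subset_iff.mpr hi)]; simp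
    have hSne : S.Nonempty := Finset.card_pos.mp (show 0 < S.card by omega)
    obtain ⟨j, hjS, hjmin⟩ := S.exists_min_image (cyclicPos i) hSne
    set C := S \ {j} with hC
    have hCcard : C.card = B.card - 2 := by
      rw [hC, Finset.card_sdiff_of_subset (Finset.singleton_subset_iff.mpr hjS), Finset.card_singleton, hScard]; omega
    have hCne : C.Nonempty := Finset.card_pos.mp (show 0 < C.card by omega)
    have hji : j ≠ i := by
      intro h; subst h; exact (Finset.mem_sdiff.mp hjS).2 (by simp)
    have hpos : ∀ x : Fin n, x ≠ i → 0 < cyclicPos i x := by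
      intro x hx
      have : (x - i : Fin n) ≠ 0 := by
        intro h; exact hx (by simpa using sub_eq_zero.mp h)
      exact Nat.pos_of_ne_zero (fun h => this (Fin.val_injective (by simpa [cyclicPos] using h)))
    have hadm : AdmissibleTriple ({i} : Finset (Fin n)) {j} C := by
      refine ⟨by simpa using hji.symm, ?_, ?_, i, ?_, ?_, ?_⟩
      · simp only [Finset.disjoint_singleton_left]
        intro h; exact (Finset.mem_sdiff.mp (Finset.mem_sdiff.mp h).1).2 (by simp)
      · simp only [Finset.disjoint_singleton_left]
        intro h; exact (Finset.mem_sdiff.mp h).2 (by simp)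
      · intro x hx y hy
        simp only [Finset.mem_singleton] at hx hy
        rw [hx, hy, cyclicPos_self]; exact hpos j hji
      · intro y hy z hz
        simp only [Finset.mem_singleton] at hy; rw [hy]
        have hzS : z ∈ S := (Finset.mem_sdiff.mp hz).1
        have hzj : z ≠ j := by simpa using (Finset.mem_sdiff.mp hz).2
        exact lt_of_le_of_ne (hjmin z hzS) (fun h => hzj (cyclicPos_inj i h.symm))
      · intro x hx z hz
        simp only [Finset.mem_singleton] at hx
        rw [hx, cyclicPos_self]
        have hzS : z ∈ S := (Finset.mem_sdiff.mp hz).1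
        exact hpos z (fun h => (Finset.mem_sdiff.mp hzS).2 (by simp [h]))
    have hunion : ({i} : Finset (Fin n)) ∪ {j} ∪ C = B := by
      rw [Finset.union_assoc, hC,
        Finset.union_sdiff_of_subset (Finset.singleton_subset_iff.mpr hjS), hS,
        Finset.union_sdiff_of_subset (Finset.singleton_subset_iff.mpr hi)]
    have key := hfact i {j} C (by simp) hCne hadm
    rw [hunion] at key
    rw [key]
    have h1 : R ({i} ∪ {j}) ∈ Subgroup.closure
        {g : G | ∃ i j : Fin n, i ≠ j ∧ g = R {i, j}} := by
      refine Subgroup.subset_closure ⟨i, j, hji.symm, ?_⟩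
      rw [Finset.insert_eq]
    have hiC : i ∉ C := by
      intro h; exact (Finset.mem_sdiff.mp (Finset.mem_sdiff.mp h).1).2 (by simp)
    have h2 : R ({i} ∪ C) ∈ Subgroup.closure
        {g : G | ∃ i j : Fin n, i ≠ j ∧ g = R {i, j}} := by
      have hcard : ({i} ∪ C : Finset (Fin n)).card = B.card - 1 := by
        rw [← Finset.insert_eq, Finset.card_insert_of_notMem hiC]; omega
      exact ih (B.card - 1) (by omega) _ (by omega) (by omega)
    exact mul_mem h1 h2
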